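/- Let p, q be coprime positive integers with q > 2p, and let λ = p² - pq + q², a₁ = p² - q², a₂ = q² - 2pq, a₃ = 2pq - p². Then gcd(a₁, a₂, a₃) divides 3, and the greatest common divisor of a₁, a₂, a₃ equals the greatest common divisor of a₁, a₂, a₃, λ. -/

import Mathlib

/-- For coprime positive integers p, q with q > 2p, gcd(a₁,a₂,a₃) divides 3 and
gcd(a₁,a₂,a₃) = gcd(a₁,a₂,a₃,λ). -/
theorem gcd_divides_three (p q : ℕ) (hp : 0 < p) (hpq : Nat.Coprime p q)
    (hq : 2 * p < q)
    (a₁ a₂ a₃ lam : ℤ)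
    (ha₁ : a₁ = (p : ℤ) ^ 2 - (q : ℤ) ^ 2)
    (ha₂ : a₂ = (q : ℤ) ^ 2 - 2 * p * q)
    (ha₃ : a₃ = 2 * p * q - (p : ℤ) ^ 2)
    (hlam : lam = (p : ℤ) ^ 2 - p * q + (q : ℤ) ^ 2) :
    (Int.gcd a₁ (Int.gcd a₂ a₃ : ℤ) ∣ 3) ∧
    Int.gcd a₁ (Int.gcd a₂ a₃ : ℤ) = Int.gcd a₁ (Int.gcd a₂ (Int.gcd a₃ lam : ℤ) : ℤ) := by
  set g : ℕ := Int.gcd a₁ (Int.gcd a₂ a₃ : ℤ) with hg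
  have hg1 : (g : ℤ) ∣ a₁ := (Int.gcd_dvd_left _ _)
  have hg23 : (g : ℤ) ∣ (Int.gcd a₂ a₃ : ℤ) := (Int.gcd_dvd_right _ _)
  have hg2 : (g : ℤ) ∣ a₂ := hg23.trans (Int.gcd_dvd_left _ _)
  have hg3 : (g : ℤ) ∣ a₃ := hg23.trans (Int.gcd_dvd_right _ _)
  -- gcd g p = 1
  have hgp : Nat.Coprime g p := by
    have h1 : (Nat.gcd g p : ℤ) ∣ (q : ℤ) ^ 2 := by
      have d2 : (Nat.gcd g p : ℤ) ∣ a₂ :=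
        (Int.natCast_dvd_natCast.mpr (Nat.gcd_dvd_left g p)).trans hg2
      have dp : (Nat.gcd g p : ℤ) ∣ (p : ℤ) :=
        Int.natCast_dvd_natCast.mpr (Nat.gcd_dvd_right g p)
      have : (q : ℤ) ^ 2 = a₂ + (p : ℤ) * (2 * q) := by rw [ha₂]; ring
      rw [this]
      exact dvd_add d2 (dp.mul_right _)
    have h2 : Nat.gcd g p ∣ q ^ 2 := by
      have := h1
      rwa [show ((q : ℤ) ^ 2) = ((q ^ 2 : ℕ) : ℤ) by push_cast; ring,
        Int.natCast_dvd_natCast] at this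
    have h3 : Nat.gcd g p ∣ 1 := by
      have hc : Nat.Coprime p (q ^ 2) := hpq.pow_right 2
      calc Nat.gcd g p ∣ Nat.gcd p (q ^ 2) := Nat.dvd_gcd (Nat.gcd_dvd_right g p) h2
        _ = 1 := hc
    exact Nat.eq_one_of_dvd_one h3
  have hgq : Nat.Coprime g q := by
    have h1 : (Nat.gcd g q : ℤ) ∣ (p : ℤ) ^ 2 := by
      have d3 : (Nat.gcd g q : ℤ) ∣ a₃ :=
        (Int.natCast_dvd_natCast.mpr (Nat.gcd_dvd_left g q)).trans hg3
      have dq : (Nat.gcd g q : ℤ) ∣ (q : ℤ) :=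
        Int.natCast_dvd_natCast.mpr (Nat.gcd_dvd_right g q)
      have : (p : ℤ) ^ 2 = -a₃ + (q : ℤ) * (2 * p) := by rw [ha₃]; ring
      rw [this]
      exact dvd_add (d3.neg_right) (dq.mul_right _)
    have h2 : Nat.gcd g q ∣ p ^ 2 := by
      rwa [show ((p : ℤ) ^ 2) = ((p ^ 2 : ℕ) : ℤ) by push_cast; ring,
        Int.natCast_dvd_natCast] at h1
    have h3 : Nat.gcd g q ∣ 1 := by
      have hc : Nat.Coprime q (p ^ 2) := (hpq.symm).pow_right 2
      calc Nat.gcd g q ∣ Nat.gcd q (p ^ 2) := Nat.dvd_gcd (Nat.gcd_dvd_right g q) h2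
        _ = 1 := hc
    exact Nat.eq_one_of_dvd_one h3
  have hcp : IsCoprime (g : ℤ) (p : ℤ) := Int.isCoprime_iff_gcd_eq_one.mpr (by
    simpa [Int.gcd_natCast_natCast] using hgp)
  have hcq : IsCoprime (g : ℤ) (q : ℤ) := Int.isCoprime_iff_gcd_eq_one.mpr (by
    simpa [Int.gcd_natCast_natCast] using hgq)
  -- g ∣ q - 2p and g ∣ 2q - p
  have hd1 : (g : ℤ) ∣ ((q : ℤ) - 2 * p) := by
    have : (g : ℤ) ∣ (q : ℤ) * ((q : ℤ) - 2 * p) := by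
      have : (q : ℤ) * ((q : ℤ) - 2 * p) = a₂ := by rw [ha₂]; ring
      rw [this]; exact hg2
    exact hcq.dvd_of_dvd_mul_left this
  have hd2 : (g : ℤ) ∣ (2 * (q : ℤ) - p) := by
    have : (g : ℤ) ∣ (p : ℤ) * (2 * (q : ℤ) - p) := by
      have : (p : ℤ) * (2 * (q : ℤ) - p) = a₃ := by rw [ha₃]; ring
      rw [this]; exact hg3
    exact hcp.dvd_of_dvd_mul_left this
  have hd3p : (g : ℤ) ∣ 3 * (p : ℤ) := by
    have : 3 * (p : ℤ) = (2 * (q : ℤ) - p) - 2 * ((q : ℤ) - 2 * p) := by ring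
    rw [this]; exact dvd_sub hd2 (hd1.mul_left 2)
  have hd3 : (g : ℤ) ∣ 3 := hcp.dvd_of_dvd_mul_right hd3p
  have hgl : (g : ℤ) ∣ lam := by
    have : lam = ((q : ℤ) - 2 * p) * ((q : ℤ) + p) + (3 : ℤ) * (p : ℤ) ^ 2 := by
      rw [hlam]; ring
    rw [this]
    exact dvd_add (hd1.mul_right _) (hd3.mul_right _)
  constructor
  · exact_mod_cast hd3
  · apply Nat.dvd_antisymm
    · have h1 : (g : ℤ) ∣ (Int.gcd a₃ lam : ℤ) := Int.dvd_coe_gcd hg3 hgl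
      have h2 : (g : ℤ) ∣ (Int.gcd a₂ (Int.gcd a₃ lam : ℤ) : ℤ) := Int.dvd_coe_gcd hg2 h1
      have h3 : (g : ℤ) ∣ (Int.gcd a₁ (Int.gcd a₂ (Int.gcd a₃ lam : ℤ) : ℤ) : ℤ) :=
        Int.dvd_coe_gcd hg1 h2
      exact_mod_cast h3
    · set h : ℕ := Int.gcd a₁ (Int.gcd a₂ (Int.gcd a₃ lam : ℤ) : ℤ) with hh
      have k1 : (h : ℤ) ∣ a₁ := (Int.gcd_dvd_left _ _)
      have k23 : (h : ℤ) ∣ (Int.gcd a₂ (Int.gcd a₃ lam : ℤ) : ℤ) := (Int.gcd_dvd_right _ _)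
      have k2 : (h : ℤ) ∣ a₂ := k23.trans (Int.gcd_dvd_left _ _)
      have k3 : (h : ℤ) ∣ a₃ := (k23.trans (Int.gcd_dvd_right _ _)).trans (Int.gcd_dvd_left _ _)
      have : (h : ℤ) ∣ (g : ℤ) := Int.dvd_coe_gcd k1 (Int.dvd_coe_gcd k2 k3)
      exact_mod_cast this
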